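/- arXiv:1103.5356 — 11 statements merged into one kernel-verified Lean document; each statement's English description precedes it below -/
import Mathlib

section
/- Let G be a group and H a subgroup. For g ∈ G, define the one-sided quasi-normalizer condition: there exist finitely many elements g₁,…,gₙ ∈ G such that Hg ⊆ ⋃ᵢ gᵢH. Then g satisfies this condition if and only if the index [H : H ∩ gHg⁻¹] is finite. -/
/-- For `g ∈ G`, the one-sided quasi-normalizer condition (`Hg` is covered by finitely many
left cosets `gᵢH`) holds iff the index `[H : H ∩ gHg⁻¹]` is finite. -/
theorem stmt0 {G : Type*} [Group G] (H : Subgroup G) (g : G) :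
    (∃ s : Finset G, {x : G | ∃ h ∈ H, x = h * g} ⊆
        ⋃ a ∈ (s : Set G), {x : G | ∃ h ∈ H, x = a * h}) ↔
      ((H ⊓ H.map (MulAut.conj g).toMonoidHom).subgroupOf H).FiniteIndex := by
  set K := (H ⊓ H.map (MulAut.conj g).toMonoidHom).subgroupOf H with hK
  set f : H → G ⧸ H := fun h => QuotientGroup.mk ((h : G) * g) with hf
  have key : ∀ h h' : H, f h = f h' ↔ h⁻¹ * h' ∈ K := by
    intro h h'
    rw [hf]
    simp only []
    rw [QuotientGroup.eq]
    constructor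
    · intro hm
      simp only [hK, Subgroup.mem_subgroupOf, Subgroup.mem_inf, Subgroup.mem_map]
      constructor
      · exact mul_mem (inv_mem h.2) h'.2
      · refine ⟨g⁻¹ * ((h : G)⁻¹ * (h' : G)) * g, ?_, by simp [MulAut.conj]; group⟩
        convert hm using 1; group
    · intro hm
      simp only [hK, Subgroup.mem_subgroupOf, Subgroup.mem_inf, Subgroup.mem_map] at hm
      obtain ⟨-, x, hx, hxe⟩ := hm
      have hxe' : (h : G)⁻¹ * (h' : G) = g * x * g⁻¹ := by
        simpa using hxe.symm
      have : ((h : G) * g)⁻¹ * ((h' : G) * g) = x := by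
        rw [show ((h : G) * g)⁻¹ * ((h' : G) * g) = g⁻¹ * ((h : G)⁻¹ * (h' : G)) * g by group,
          hxe']; group
      rw [this]; exact hx
  have hresp : ∀ h h' : H, (QuotientGroup.leftRel K) h h' → f h = f h' := by
    intro h h' hr
    rw [QuotientGroup.leftRel_apply] at hr
    exact (key h h').mpr hr
  set Φ : H ⧸ K → G ⧸ H := Quotient.lift f hresp with hΦ
  have hΦmk : ∀ h : H, Φ (QuotientGroup.mk h) = f h := fun h => rfl
  have hΦinj : Function.Injective Φ := by
    intro q q'
    induction q using QuotientGroup.induction_on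
    induction q' using QuotientGroup.induction_on
    intro hq
    rw [hΦmk, hΦmk] at hq
    exact QuotientGroup.eq.mpr ((key _ _).mp hq)
  constructor
  · rintro ⟨s, hs⟩
    have hfin : Finite (H ⧸ K) := by
      have : Set.range Φ ⊆ QuotientGroup.mk '' (s : Set G) := by
        rintro _ ⟨q, rfl⟩
        induction q using QuotientGroup.induction_on with
        | H h =>
          have hx := hs ⟨h, h.2, rfl⟩
          simp only [Set.mem_iUnion, Set.mem_setOf_eq, exists_prop] at hx
          obtain ⟨a, ha, k, hk, hke⟩ := hx
          refine ⟨a, ha, ?_⟩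
          rw [hΦmk]
          have hak : a⁻¹ * ((h : G) * g) = k := by rw [hke]; group
          exact QuotientGroup.eq.mpr (by rw [hak]; exact hk)
      have hfr : Finite (Set.range Φ) :=
        Set.Finite.subset (Set.Finite.image _ s.finite_toSet) this
      exact Finite.of_injective (fun q : H ⧸ K => (⟨Φ q, Set.mem_range_self q⟩ : Set.range Φ))
        (fun a b hab => hΦinj (congrArg Subtype.val hab))
    exact Subgroup.finiteIndex_of_finite_quotient (H := K)
  · intro hfi
    have : Finite (H ⧸ K) := Subgroup.finite_quotient_of_finiteIndex (H := K)
    have hrfin : (Set.range Φ).Finite := Set.finite_range Φ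
    have hofin : (Quotient.out '' Set.range Φ).Finite := hrfin.image _
    refine ⟨hofin.toFinset, ?_⟩
    rintro x ⟨h, hh, rfl⟩
    set a : G := (f ⟨h, hh⟩).out with ha
    have hamem : a ∈ Quotient.out '' Set.range Φ :=
      ⟨f ⟨h, hh⟩, ⟨QuotientGroup.mk ⟨h, hh⟩, rfl⟩, rfl⟩
    have hmk : (QuotientGroup.mk a : G ⧸ H) = f ⟨h, hh⟩ := Quotient.out_eq _
    have : a⁻¹ * (h * g) ∈ H := by
      have := QuotientGroup.eq.mp hmk
      simpa using this
    refine Set.mem_iUnion.mpr ⟨a, Set.mem_iUnion.mpr ⟨by simpa using hamem, ?_⟩⟩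
    exact ⟨a⁻¹ * (h * g), this, by group⟩
end

section
/- Let H act on a countable set S such that every H-orbit on S is infinite. Then for every finite subset Y ⊆ S there exists h ∈ H such that h·Y ∩ Y = ∅. -/
open scoped Pointwise

/-- If a group `H` acts on a countable set `S` with all orbits infinite, then every finite
subset `Y ⊆ S` can be shifted off itself: there is `h ∈ H` with `h • Y ∩ Y = ∅`. -/
theorem stmt2 {H S : Type*} [Group H] [Countable S] [MulAction H S]
    (horb : ∀ s : S, (MulAction.orbit H s).Infinite) (Y : Finset S) :
    ∃ h : H, ∀ y ∈ Y, h • y ∉ Y := by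
  classical
  by_contra hcon
  push_neg at hcon
  -- cover H by cosets of stabilizers
  set g : S × S → H := fun p =>
    if hp : ∃ g : H, g • p.1 = p.2 then hp.choose else 1 with hg
  have hcovers : ⋃ p ∈ Y ×ˢ Y, g p • (MulAction.stabilizer H p.1 : Set H) = Set.univ := by
    ext h
    simp only [Set.mem_iUnion, Set.mem_univ, iff_true]
    obtain ⟨y, hy, hy'⟩ := hcon h
    refine ⟨(y, h • y), Finset.mem_product.mpr ⟨hy, hy'⟩, ?_⟩
    have hex : ∃ g : H, g • (y, h • y).1 = (y, h • y).2 := ⟨h, rfl⟩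
    have hgp : g (y, h • y) • y = h • y := by
      simp only [hg, dif_pos hex]
      exact hex.choose_spec
    refine ⟨(g (y, h • y))⁻¹ * h, ?_, by simp [smul_eq_mul, mul_assoc]⟩
    simp only [SetLike.mem_coe, MulAction.mem_stabilizer_iff, mul_smul]
    rw [inv_smul_eq_iff]; exact hgp.symm
  obtain ⟨p, _, hfi⟩ := Subgroup.exists_finiteIndex_of_leftCoset_cover hcovers
  have : (MulAction.stabilizer H p.1).index = 0 := by
    rw [MulAction.index_stabilizer]
    exact (horb p.1).ncard
  exact hfi.index_ne_zero this
end

section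
/- Let H ≤ K ≤ G be groups. The following are equivalent: (1) for every finite set F ⊆ G \ K, there exists a finite set E ⊆ H such that for all h ∈ H \ E one has FhF ∩ H = ∅; (2) for all g, k ∈ G \ K the set E(g,k) = {γ ∈ H : gγk ∈ H} is finite; (3) for every g ∈ G \ K the group E(g) = gHg⁻¹ ∩ H is finite. -/
/-- Equivalent formulations of condition (ST) for a triple `H ≤ K ≤ G`:
(1) every finite `F ⊆ G \ K` admits a finite exceptional set `E ⊆ H` with `FhF ∩ H = ∅` for
`h ∈ H \ E`; (2) all sets `E(g,k) = {γ ∈ H : gγk ∈ H}` (`g,k ∉ K`) are finite;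
(3) all groups `E(g) = gHg⁻¹ ∩ H` (`g ∉ K`) are finite. -/
theorem stmt4 {G : Type*} [Group G] [Countable G] (H K : Subgroup G) (hHK : H ≤ K)
    (hHinf : (H : Set G).Infinite) (hKinf : (K : Set G).Infinite) :
    List.TFAE
      [∀ F : Finset G, (↑F ⊆ ((K : Set G)ᶜ)) →
          ∃ E : Finset G, (↑E ⊆ (H : Set G)) ∧
            ∀ h ∈ H, h ∉ E → ∀ f₁ ∈ F, ∀ f₂ ∈ F, f₁ * h * f₂ ∉ H,
        ∀ g ∉ K, ∀ k ∉ K, {γ : G | γ ∈ H ∧ g * γ * k ∈ H}.Finite,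
        ∀ g ∉ K, {x : G | x ∈ H ∧ g⁻¹ * x * g ∈ H}.Finite] := by
  tfae_have 1 → 2 := by
    classical
    intro h1 g hg k hk
    obtain ⟨E, hE, hEspec⟩ := h1 ({g, k} : Finset G) (by
      intro x hx
      simp only [Finset.coe_insert, Finset.coe_singleton, Set.mem_insert_iff,
        Set.mem_singleton_iff] at hx
      rcases hx with rfl | rfl <;> simpa)
    apply Set.Finite.subset E.finite_toSet
    rintro γ ⟨hγH, hγ2⟩
    by_contra hγE
    exact hEspec γ hγH hγE g (by simp) k (by simp) hγ2
  tfae_have 2 → 3 := by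
    intro h2 g hg
    simpa using h2 g⁻¹ (by simpa) g hg
  tfae_have 3 → 2 := by
    intro h3 g hg k hk
    rcases Set.eq_empty_or_nonempty {γ : G | γ ∈ H ∧ g * γ * k ∈ H} with hS | ⟨γ₀, hγ₀H, hγ₀⟩
    · simp [hS]
    · have hfin := (h3 g⁻¹ (by simpa)).image (· * γ₀)
      apply hfin.subset
      rintro γ ⟨hγH, hγ2⟩
      refine ⟨γ * γ₀⁻¹, ⟨H.mul_mem hγH (H.inv_mem hγ₀H), ?_⟩, by group⟩
      have : (g * γ * k) * (g * γ₀ * k)⁻¹ ∈ H := H.mul_mem hγ2 (H.inv_mem hγ₀)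
      have heq : (g * γ * k) * (g * γ₀ * k)⁻¹ = g⁻¹⁻¹ * (γ * γ₀⁻¹) * g⁻¹ := by group
      rwa [heq] at this
  tfae_have 2 → 1 := by
    intro h2 F hF
    have hfin : (⋃ f₁ ∈ F, ⋃ f₂ ∈ F, {γ : G | γ ∈ H ∧ f₁ * γ * f₂ ∈ H}).Finite := by
      apply Set.Finite.biUnion F.finite_toSet
      intro f₁ hf₁
      apply Set.Finite.biUnion F.finite_toSet
      intro f₂ hf₂
      exact h2 f₁ (hF hf₁) f₂ (hF hf₂)
    refine ⟨hfin.toFinset, ?_, ?_⟩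
    · intro x hx
      simp only [Set.Finite.coe_toFinset, Set.mem_iUnion] at hx
      obtain ⟨f₁, _, f₂, _, hxH, _⟩ := hx
      exact hxH
    · intro h hH hE f₁ hf₁ f₂ hf₂ hcon
      exact hE (by
        simp only [Set.Finite.mem_toFinset, Set.mem_iUnion]
        exact ⟨f₁, hf₁, f₂, hf₂, hH, hcon⟩)
  tfae_finish
end

section
/- Let H ≤ K ≤ G be groups with H infinite. Then the following are equivalent: (a) every orbit of the action of H on (G \ K)/H (by left multiplication on left cosets gH with g ∉ K) is infinite; (b) for every nonempty finite set F ⊆ G \ K, there exists h ∈ H such that FhF ∩ H = ∅. -/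
open scoped Pointwise

section Aux

variable {G : Type*} [Group G] (H : Subgroup G)

/-- The left coset `a * H` as a set-builder set matching the statement. -/
def cosetSet (a : G) : Set G := {x : G | ∃ m ∈ H, x = a * m}

lemma cosetSet_eq_iff {a b : G} : cosetSet H a = cosetSet H b ↔ a⁻¹ * b ∈ H := by
  constructor
  · intro h
    have hb : b ∈ cosetSet H b := ⟨1, H.one_mem, by simp⟩
    rw [← h] at hb
    obtain ⟨m, hm, hbm⟩ := hb
    have : a⁻¹ * b = m := by rw [hbm]; group
    rw [this]; exact hm
  · intro h
    ext x
    constructor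
    · rintro ⟨m, hm, rfl⟩
      exact ⟨(a⁻¹ * b)⁻¹ * m, H.mul_mem (H.inv_mem h) hm, by group⟩
    · rintro ⟨m, hm, rfl⟩
      exact ⟨(a⁻¹ * b) * m, H.mul_mem h hm, by group⟩

end Aux

/-- For infinite `H ≤ K ≤ G`: every orbit of `H` acting by left multiplication on the left
cosets `gH ⊆ G \ K` is infinite iff condition (SS) holds: for every nonempty finite
`F ⊆ G \ K` there is `h ∈ H` with `FhF ∩ H = ∅`. -/
theorem stmt5 {G : Type*} [Group G] [Countable G] (H K : Subgroup G) (hHK : H ≤ K)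
    (hHinf : (H : Set G).Infinite) (hKinf : (K : Set G).Infinite) :
    (∀ g : G, g ∉ K →
        {s : Set G | ∃ h ∈ H, s = {x : G | ∃ m ∈ H, x = h * g * m}}.Infinite) ↔
      (∀ F : Finset G, F.Nonempty → (↑F ⊆ ((K : Set G)ᶜ)) →
        ∃ h ∈ H, ∀ f₁ ∈ F, ∀ f₂ ∈ F, f₁ * h * f₂ ∉ H) := by
  classical
  have hOrb : ∀ g : G, {s : Set G | ∃ h ∈ H, s = {x : G | ∃ m ∈ H, x = h * g * m}}
      = {s : Set G | ∃ h ∈ H, s = cosetSet H (h * g)} := by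
    intro g; rfl
  constructor
  · -- (a) → (b)
    intro ha F hFne hFK
    by_contra hb
    push_neg at hb
    -- hb : ∀ h ∈ H, ∃ f₁ ∈ F, ∃ f₂ ∈ F, f₁ * h * f₂ ∈ H
    -- subgroups of H : L f = {h : H | f * h * f⁻¹ ∈ H}
    set L : G → Subgroup ↥H :=
      fun f => Subgroup.comap ((MulAut.conj f).toMonoidHom.comp H.subtype) H with hL
    have hLmem : ∀ (f : G) (h : ↥H), h ∈ L f ↔ f * (h : G) * f⁻¹ ∈ H := by
      intro f h
      simp [hL, Subgroup.mem_comap, MulAut.conj_apply]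
    -- choice of base points
    set w : G × G → ↥H := fun p =>
      if hp : ∃ h : ↥H, p.1 * (h : G) * p.2 ∈ H then hp.choose else 1 with hw
    have hcovers : ⋃ p ∈ F ×ˢ F, ((w p)⁻¹ : ↥H) • (L p.1 : Set ↥H) = Set.univ := by
      ext x
      simp only [Set.mem_iUnion, Set.mem_univ, iff_true]
      obtain ⟨f₁, hf₁, f₂, hf₂, hmem⟩ := hb ((x⁻¹ : ↥H) : G) (x⁻¹ : ↥H).2
      refine ⟨(f₁, f₂), Finset.mem_product.mpr ⟨hf₁, hf₂⟩, ?_⟩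
      have hp : ∃ h : ↥H, f₁ * (h : G) * f₂ ∈ H := ⟨x⁻¹, hmem⟩
      have hspec : f₁ * ((hp.choose : ↥H) : G) * f₂ ∈ H := hp.choose_spec
      have hwp : w (f₁, f₂) = hp.choose := dif_pos hp
      rw [mem_leftCoset_iff, inv_inv, hwp, SetLike.mem_coe, hLmem]
      have : f₁ * ((hp.choose : ↥H) : G) * f₂ * (f₁ * ((x⁻¹ : ↥H) : G) * f₂)⁻¹ ∈ H :=
        H.mul_mem hspec (H.inv_mem hmem)
      have heq : f₁ * ((hp.choose : ↥H) : G) * f₂ * (f₁ * ((x⁻¹ : ↥H) : G) * f₂)⁻¹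
          = f₁ * ((hp.choose * x : ↥H) : G) * f₁⁻¹ := by
        push_cast
        group
      rwa [heq] at this
    obtain ⟨p, hpF, hfin⟩ := Subgroup.exists_finiteIndex_of_leftCoset_cover hcovers
    have hf : p.1 ∈ F := (Finset.mem_product.mp hpF).1
    have hfK : p.1 ∉ K := hFK hf
    have hfinvK : (p.1)⁻¹ ∉ K := fun h => hfK (by simpa using K.inv_mem h)
    refine (ha (p.1)⁻¹ hfinvK) ?_
    rw [hOrb]
    haveI : (L p.1).FiniteIndex := hfin
    -- the orbit factors through the finite quotient H ⧸ L p.1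
    set χ : ↥H ⧸ (L p.1) → Set G := Quotient.lift
      (fun h : ↥H => cosetSet H ((h : G) * (p.1)⁻¹)) (by
        intro a b hab
        have hab' : a⁻¹ * b ∈ L p.1 := (QuotientGroup.leftRel_apply).mp hab
        rw [hLmem] at hab'
        refine (cosetSet_eq_iff H).mpr ?_
        have heq : p.1 * ((a⁻¹ * b : ↥H) : G) * (p.1)⁻¹
            = ((a : G) * (p.1)⁻¹)⁻¹ * ((b : G) * (p.1)⁻¹) := by
          push_cast
          group
        rwa [heq] at hab') with hχ
    have hsub : {s : Set G | ∃ h ∈ H, s = cosetSet H (h * (p.1)⁻¹)} ⊆ Set.range χ := by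
      rintro s ⟨h, hh, rfl⟩
      exact ⟨QuotientGroup.mk (⟨h, hh⟩ : ↥H), rfl⟩
    exact (Set.finite_range χ).subset hsub
  · -- (b) → (a)
    intro hb g hgK
    rw [hOrb]
    intro hfin
    set w : Set G → ↥H := fun s =>
      if hs : ∃ h : ↥H, s = cosetSet H ((h : G) * g) then hs.choose else 1 with hw
    have hwspec : ∀ s ∈ {s : Set G | ∃ h ∈ H, s = cosetSet H (h * g)},
        s = cosetSet H (((w s : ↥H) : G) * g) := by
      rintro s ⟨h, hh, rfl⟩
      have hs : ∃ h' : ↥H, cosetSet H (h * g) = cosetSet H ((h' : G) * g) := ⟨⟨h, hh⟩, rfl⟩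
      have := hs.choose_spec
      rw [hw]; simp only [hs, dif_pos]
      exact this
    set F : Finset G := insert g (hfin.toFinset.image (fun s => g⁻¹ * ((w s : ↥H) : G)⁻¹))
      with hF
    have hgF : g ∈ F := Finset.mem_insert_self _ _
    have hFK : ↑F ⊆ ((K : Set G)ᶜ) := by
      intro x hx
      simp only [hF, Finset.coe_insert, Set.mem_insert_iff, Finset.coe_image,
        Set.mem_image, Finset.mem_coe, Set.Finite.mem_toFinset] at hx
      rcases hx with rfl | ⟨s, _, rfl⟩
      · exact hgK
      · intro hxK
        have hwK : ((w s : ↥H) : G) ∈ K := hHK (w s).2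
        have : g⁻¹ ∈ K := by
          have := K.mul_mem hxK hwK
          simpa [mul_assoc] using this
        exact hgK (by simpa using K.inv_mem this)
    obtain ⟨h, hh, hfor⟩ := hb F ⟨g, hgF⟩ hFK
    -- the coset of h*g is in the (finite) orbit
    have hs₀ : cosetSet H (h * g) ∈ {s : Set G | ∃ h ∈ H, s = cosetSet H (h * g)} :=
      ⟨h, hh, rfl⟩
    set s₀ : Set G := cosetSet H (h * g) with hs₀def
    have hspec := hwspec s₀ hs₀
    have hmemH : (h * g)⁻¹ * (((w s₀ : ↥H) : G) * g) ∈ H := (cosetSet_eq_iff H).mp hspec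
    have hf₁F : g⁻¹ * ((w s₀ : ↥H) : G)⁻¹ ∈ F := by
      refine Finset.mem_insert_of_mem ?_
      exact Finset.mem_image.mpr ⟨s₀, (hfin.mem_toFinset).mpr hs₀, rfl⟩
    refine hfor _ hf₁F g hgF ?_
    have : ((h * g)⁻¹ * (((w s₀ : ↥H) : G) * g))⁻¹ ∈ H := H.inv_mem hmemH
    have heq : ((h * g)⁻¹ * (((w s₀ : ↥H) : G) * g))⁻¹
        = g⁻¹ * ((w s₀ : ↥H) : G)⁻¹ * h * g := by group
    rwa [heq] at this
end

section
/- Let H ≤ K ≤ G be groups. Condition (SS) (for every nonempty finite F ⊆ G \ K there is h ∈ H with FhF ∩ H = ∅) holds if and only if the following condition (wSS) holds: for every nonempty finite set F ⊆ G \ K and every g ∈ G \ K, there exists h ∈ H with Fhg ∩ H = ∅. -/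
open scoped Pointwise

section aux

variable {G : Type*} [Group G] (H K : Subgroup G)

/-- The subgroup of `H` of elements `h` with `g⁻¹ h g ∈ H`. -/
private noncomputable def Ng (g : G) : Subgroup ↥H :=
  H.comap ((MulAut.conj g⁻¹).toMonoidHom.comp H.subtype)

private lemma mem_Ng {g : G} {x : ↥H} : x ∈ Ng H g ↔ g⁻¹ * (x : G) * g ∈ H := by
  simp [Ng, Subgroup.mem_comap, MulAut.conj, mul_assoc]

/-- Key lemma: under (wSS), if there is a nonempty "bad coset" for the pair `(f, g)`,
then `Ng H g` has infinite index in `H`. -/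
private lemma key (hHK : H ≤ K)
    (hw : ∀ F : Finset G, F.Nonempty → (↑F ⊆ ((K : Set G)ᶜ)) → ∀ g : G, g ∉ K →
        ∃ h ∈ H, ∀ f ∈ F, f * h * g ∉ H)
    {f g h₀ : G} (hf : f ∉ K) (hg : g ∉ K) (hh₀ : h₀ ∈ H) (hfh : f * h₀ * g ∈ H) :
    ¬ (Ng H g).FiniteIndex := by
  classical
  intro hfi
  haveI := hfi
  haveI : Fintype (↥H ⧸ Ng H g) := (Ng H g).fintypeQuotientOfFiniteIndex
  -- transversal
  set T : Finset ↥H := Finset.univ.image (fun q : ↥H ⧸ Ng H g => q.out) with hT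
  have hTne : T.Nonempty := Finset.Nonempty.image Finset.univ_nonempty _
  set F' : Finset G := T.image (fun t : ↥H => f * h₀ * ((t : G))⁻¹) with hF'
  have hF'ne : F'.Nonempty := by
    obtain ⟨t0, ht0⟩ := hTne
    exact ⟨_, by rw [hF']; exact Finset.mem_image_of_mem _ ht0⟩
  have hF'sub : (↑F' : Set G) ⊆ ((K : Set G)ᶜ) := by
    intro x hx
    rw [Finset.mem_coe, hF', Finset.mem_image] at hx
    obtain ⟨t, -, rfl⟩ := hx
    intro hxK
    apply hf
    have : f * h₀ * (t : G)⁻¹ * ((t : G) * h₀⁻¹) ∈ K :=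
      K.mul_mem hxK (K.mul_mem (hHK t.2) (K.inv_mem (hHK hh₀)))
    simpa [mul_assoc] using this
  obtain ⟨h, hh, hprop⟩ := hw F' hF'ne hF'sub g hg
  -- find the coset of `h`
  set h' : ↥H := ⟨h, hh⟩ with hh'
  set t : ↥H := (QuotientGroup.mk h' : ↥H ⧸ Ng H g).out with ht
  have htT : t ∈ T := by
    simp only [hT, Finset.mem_image]
    exact ⟨QuotientGroup.mk h', Finset.mem_univ _, rfl⟩
  have htF' : f * h₀ * (t : G)⁻¹ ∈ F' := by
    rw [hF']; exact Finset.mem_image_of_mem _ htT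
  have hcoset : t⁻¹ * h' ∈ Ng H g := by
    rw [← QuotientGroup.eq]
    exact QuotientGroup.out_eq' _
  rw [mem_Ng] at hcoset
  apply hprop _ htF'
  have : (f * h₀ * g) * (g⁻¹ * ((t⁻¹ * h' : ↥H) : G) * g) ∈ H := H.mul_mem hfh hcoset
  have heq : (f * h₀ * g) * (g⁻¹ * ((t⁻¹ * h' : ↥H) : G) * g)
      = f * h₀ * (t : G)⁻¹ * h * g := by
    push_cast
    group
    rfl
  rwa [heq] at this

end aux

/-- Condition (SS) is equivalent to the apparently weaker condition (wSS): for every nonempty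
finite `F ⊆ G \ K` and every `g ∈ G \ K` there is `h ∈ H` with `Fhg ∩ H = ∅`. -/
theorem stmt6 {G : Type*} [Group G] [Countable G] (H K : Subgroup G) (hHK : H ≤ K)
    (hHinf : (H : Set G).Infinite) (hKinf : (K : Set G).Infinite) :
    (∀ F : Finset G, F.Nonempty → (↑F ⊆ ((K : Set G)ᶜ)) →
        ∃ h ∈ H, ∀ f₁ ∈ F, ∀ f₂ ∈ F, f₁ * h * f₂ ∉ H) ↔
      (∀ F : Finset G, F.Nonempty → (↑F ⊆ ((K : Set G)ᶜ)) → ∀ g : G, g ∉ K →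
        ∃ h ∈ H, ∀ f ∈ F, f * h * g ∉ H) := by
  classical
  constructor
  · -- (SS) → (wSS)
    intro hSS F hFne hFsub g hg
    obtain ⟨h, hh, hprop⟩ := hSS (insert g F) (Finset.insert_nonempty _ _) (by
      rw [Finset.coe_insert]
      exact Set.insert_subset hg hFsub)
    exact ⟨h, hh, fun f hf =>
      hprop f (Finset.mem_insert_of_mem hf) g (Finset.mem_insert_self _ _)⟩
  · -- (wSS) → (SS)
    intro hw F hFne hFsub
    by_contra hno
    push_neg at hno
    -- build a coset cover of H
    set s : Finset (G × G) :=
      (F ×ˢ F).filter (fun p => ∃ h ∈ H, p.1 * h * p.2 ∈ H) with hs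
    have hrepex : ∀ p ∈ s, ∃ h ∈ H, p.1 * h * p.2 ∈ H := fun p hp =>
      (Finset.mem_filter.mp hp).2
    set rep : G × G → ↥H := fun p =>
      if hp : ∃ h ∈ H, p.1 * h * p.2 ∈ H then ⟨hp.choose, hp.choose_spec.1⟩ else 1
      with hrep
    have hcovers : ⋃ p ∈ s, ((rep p) • ((Ng H p.2 : Subgroup ↥H) : Set ↥H) : Set ↥H) = (Set.univ : Set ↥H) := by
      rw [Set.eq_univ_iff_forall]
      intro x
      obtain ⟨f₁, hf₁, f₂, hf₂, hmem⟩ := hno (x : G) x.2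
      have hps : (f₁, f₂) ∈ s := by
        rw [hs, Finset.mem_filter]
        exact ⟨Finset.mem_product.mpr ⟨hf₁, hf₂⟩, (x : G), x.2, hmem⟩
      have hex : ∃ h ∈ H, f₁ * h * f₂ ∈ H := ⟨(x : G), x.2, hmem⟩
      rw [Set.mem_iUnion₂]
      refine ⟨(f₁, f₂), hps, ?_⟩
      rw [mem_leftCoset_iff, SetLike.mem_coe, mem_Ng]
      have hrepdef : rep (f₁, f₂) = (⟨hex.choose, hex.choose_spec.1⟩ : ↥H) := by
        rw [hrep]; simp only [dif_pos hex]
      obtain ⟨hh₀, hfh₀⟩ := hex.choose_spec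
      have : (f₁ * hex.choose * f₂)⁻¹ * (f₁ * (x : G) * f₂) ∈ H :=
        H.mul_mem (H.inv_mem hfh₀) hmem
      have heq : (f₁ * hex.choose * f₂)⁻¹ * (f₁ * (x : G) * f₂)
          = f₂⁻¹ * (((rep (f₁, f₂))⁻¹ * x : ↥H) : G) * f₂ := by
        rw [hrepdef]
        push_cast
        group
      rwa [heq] at this
    obtain ⟨p, hps, hfi⟩ := Subgroup.exists_finiteIndex_of_leftCoset_cover hcovers
    rw [hs, Finset.mem_filter] at hps
    obtain ⟨hpF, h₀, hh₀, hfh⟩ := hps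
    rw [Finset.mem_product] at hpF
    exact key H K hHK hw (hFsub hpF.1) (hFsub hpF.2) hh₀ hfh hfi
end

section
/- Let K be a group acting by automorphisms α on a group A, let H ⊴ K be a normal subgroup of K, and form G = A ⋊ K. Identify K with {e} × K ≤ G. If e is the only element a ∈ A fixed by α_h for all h ∈ H, then the normalizer of H in G equals K: N_G(H) = K. -/
/-- If `H ⊴ K`, `K` acts on `A` by automorphisms `φ`, `G = A ⋊[φ] K`, and the identity is the
only element of `A` fixed by every `φ h`, `h ∈ H`, then `N_G(H) = K`. -/
theorem stmt8 {A K : Type*} [Group A] [Group K] (φ : K →* MulAut A)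
    (H : Subgroup K) (hH : H.Normal)
    (hfix : ∀ a : A, (∀ h ∈ H, φ h a = a) → a = 1) :
    Subgroup.normalizer ((H.map (SemidirectProduct.inr : K →* A ⋊[φ] K)) : Set (A ⋊[φ] K)) =
      (SemidirectProduct.inr : K →* A ⋊[φ] K).range := by
  apply le_antisymm
  · intro g hg
    rw [Subgroup.mem_normalizer_iff] at hg
    have key : ∀ h' ∈ H, φ h' g.left = g.left := by
      intro h' hh'
      have hmem : SemidirectProduct.inr (g.right⁻¹ * h' * g.right) ∈
          H.map (SemidirectProduct.inr : K →* A ⋊[φ] K) :=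
        Subgroup.mem_map_of_mem _ (hH.conj_mem' h' hh' g.right)
      rcases (hg _).mp hmem with ⟨h₂, hh₂, heq⟩
      have hleft := congrArg SemidirectProduct.left heq
      simp [SemidirectProduct.mul_left, SemidirectProduct.mul_right,
        SemidirectProduct.inv_left, SemidirectProduct.inv_right, mul_assoc] at hleft
      -- hleft : 1 = g.left * ((φ h') g.left)⁻¹
      have := mul_inv_eq_one.mp hleft.symm
      exact this.symm
    have hl : g.left = 1 := hfix g.left key
    exact ⟨g.right, by ext <;> simp [hl]⟩
  · rintro _ ⟨k, rfl⟩
    rw [Subgroup.mem_normalizer_iff]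
    intro x
    constructor
    · rintro ⟨h, hh, rfl⟩
      exact ⟨k * h * k⁻¹, hH.conj_mem h hh k, by simp [mul_assoc]⟩
    · rintro ⟨h, hh, heq⟩
      have hx : x = SemidirectProduct.inr (k⁻¹ * h * k) := by
        have h1 : (SemidirectProduct.inr (k⁻¹ * h * k) : A ⋊[φ] K) =
            (SemidirectProduct.inr k)⁻¹ * SemidirectProduct.inr h * SemidirectProduct.inr k := by
          simp [mul_assoc]
        rw [h1, heq]; group
      exact hx ▸ ⟨k⁻¹ * h * k, hH.conj_mem' h hh k, rfl⟩
end

section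
/- Let G = A ⋊_α K with H ≤ K ≤ G as above. Then for every g ∈ G \ K the subgroup H ∩ gHg⁻¹ is finite if and only if for every a ∈ A with a ≠ e, the stabilizer {h ∈ H : α_h(a) = a} is finite. -/
open SemidirectProduct

/-- In `G = A ⋊[φ] K` with `H ≤ K`: the groups `H ∩ gHg⁻¹` are finite for all `g ∈ G \ K`
iff every `a ∈ A \ {e}` has finite stabilizer `{h ∈ H : φ h a = a}`. -/
theorem stmt9 {A K : Type*} [Group A] [Group K] (φ : K →* MulAut A) (H : Subgroup K) :
    (∀ g : A ⋊[φ] K, g ∉ (SemidirectProduct.inr : K →* A ⋊[φ] K).range →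
        {x : A ⋊[φ] K | x ∈ H.map (SemidirectProduct.inr : K →* A ⋊[φ] K) ∧
          g⁻¹ * x * g ∈ H.map (SemidirectProduct.inr : K →* A ⋊[φ] K)}.Finite) ↔
      (∀ a : A, a ≠ 1 → {h : K | h ∈ H ∧ φ h a = a}.Finite) := by
  have memmap : ∀ x : A ⋊[φ] K,
      x ∈ H.map (SemidirectProduct.inr : K →* A ⋊[φ] K) ↔ x.left = 1 ∧ x.right ∈ H := by
    intro x
    constructor
    · rintro ⟨h, hh, rfl⟩; exact ⟨rfl, hh⟩
    · rintro ⟨h1, h2⟩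
      exact ⟨x.right, h2, by ext <;> simp [h1.symm]⟩
  constructor
  · intro hfin a ha
    have h1 : (SemidirectProduct.inl a : A ⋊[φ] K) ∉
        (SemidirectProduct.inr : K →* A ⋊[φ] K).range := by
      rintro ⟨k, hk⟩
      exact ha (by simpa using (congrArg SemidirectProduct.left hk).symm)
    have hf := hfin (SemidirectProduct.inl a) h1
    have : {h : K | h ∈ H ∧ φ h a = a} =
        (SemidirectProduct.inr : K →* A ⋊[φ] K) ⁻¹'
          {x : A ⋊[φ] K | x ∈ H.map (SemidirectProduct.inr : K →* A ⋊[φ] K) ∧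
            (SemidirectProduct.inl a : A ⋊[φ] K)⁻¹ * x * SemidirectProduct.inl a ∈
              H.map (SemidirectProduct.inr : K →* A ⋊[φ] K)} := by
      ext h
      simp only [Set.mem_setOf_eq, Set.mem_preimage, memmap, left_inr, right_inr,
        mul_left, mul_right, inv_left, inv_right, left_inl, right_inl]
      constructor
      · rintro ⟨hH, hfix⟩
        refine ⟨⟨trivial, hH⟩, ?_, by simpa using hH⟩
        simp [hfix]
      · rintro ⟨-, hleft, hH⟩
        refine ⟨by simpa using hH, ?_⟩
        simp only [map_one, map_inv, mul_one] at hleft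
        have : a⁻¹ * φ h a = 1 := by simpa using hleft
        have := mul_eq_one_iff_inv_eq.mp this
        simpa using this.symm
    rw [this]
    exact hf.preimage (Set.injOn_of_injective inr_injective)
  · intro hfin g hg
    obtain ⟨a, k⟩ := g
    have ha : a ≠ 1 := by
      intro h; exact hg ⟨k, by ext <;> simp [h]⟩
    have hsub : {x : A ⋊[φ] K | x ∈ H.map (SemidirectProduct.inr : K →* A ⋊[φ] K) ∧
          (⟨a, k⟩ : A ⋊[φ] K)⁻¹ * x * ⟨a, k⟩ ∈ H.map (SemidirectProduct.inr : K →* A ⋊[φ] K)}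
        ⊆ (SemidirectProduct.inr : K →* A ⋊[φ] K) '' {h : K | h ∈ H ∧ φ h a = a} := by
      rintro x ⟨hx1, hx2⟩
      rw [memmap] at hx1 hx2
      refine ⟨x.right, ⟨hx1.2, ?_⟩, by ext <;> simp [hx1.1]⟩
      have hleft := hx2.1
      simp only [mul_left, mul_right, inv_left, inv_right, hx1.1, map_one, mul_one] at hleft
      -- hleft : φ k⁻¹ a⁻¹ * φ (k⁻¹ * x.right) a = 1
      have : φ (k⁻¹ * x.right) a = φ k⁻¹ a := by
        have := mul_eq_one_iff_inv_eq.mp hleft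
        simpa using this.symm
      have h2 : φ k (φ (k⁻¹ * x.right) a) = φ k (φ k⁻¹ a) := by rw [this]
      calc φ x.right a = φ (k * (k⁻¹ * x.right)) a := by rw [mul_inv_cancel_left]
        _ = φ k (φ (k⁻¹ * x.right) a) := by rw [map_mul, MulAut.mul_apply]
        _ = φ k (φ k⁻¹ a) := h2
        _ = φ (k * k⁻¹) a := by rw [map_mul, MulAut.mul_apply]
        _ = a := by simp
    exact ((hfin a ha).image _).subset hsub
end

section
/- Let G = A ⋊_α K with H ≤ K. The triple H ≤ K ≤ G satisfies condition (SS) (for every nonempty finite F ⊆ G \ K there exists h ∈ H with FhF ∩ H = ∅, identifying H with {e}×H) if and only if for every finite subset E ⊆ A \ {e} there exists h ∈ H with E ∩ α_h(E) = ∅. -/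
open SemidirectProduct

theorem aux_mem_inr_range {A K : Type*} [Group A] [Group K] (φ : K →* MulAut A)
    (g : A ⋊[φ] K) : g ∈ (inr : K →* A ⋊[φ] K).range ↔ g.left = 1 := by
  constructor
  · rintro ⟨k, rfl⟩; rfl
  · intro h
    exact ⟨g.right, by ext <;> simp [h]⟩

/-- In `G = A ⋊[φ] K` with `H ≤ K`: the triple `H ≤ K ≤ G` satisfies condition (SS) iff for
every finite `E ⊆ A \ {e}` there is `h ∈ H` with `E ∩ φ h (E) = ∅`. -/
theorem stmt10 {A K : Type*} [Group A] [Group K] (φ : K →* MulAut A) (H : Subgroup K) :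
    (∀ F : Finset (A ⋊[φ] K), F.Nonempty →
        (∀ f ∈ F, f ∉ (SemidirectProduct.inr : K →* A ⋊[φ] K).range) →
        ∃ h ∈ H, ∀ f₁ ∈ F, ∀ f₂ ∈ F,
          f₁ * SemidirectProduct.inr h * f₂ ∉
            H.map (SemidirectProduct.inr : K →* A ⋊[φ] K)) ↔
      (∀ E : Finset A, (↑E ⊆ {a : A | a ≠ 1}) → ∃ h ∈ H, ∀ a ∈ E, φ h a ∉ E) := by
  classical
  constructor
  · intro hSS E hE
    rcases E.eq_empty_or_nonempty with rfl | hEne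
    · exact ⟨1, H.one_mem, by simp⟩
    · set F : Finset (A ⋊[φ] K) := (E ∪ E.image (·⁻¹)).image SemidirectProduct.inl with hFdef
      have hFne : F.Nonempty := by
        obtain ⟨a, ha⟩ := hEne
        exact ⟨inl a, Finset.mem_image_of_mem _ (Finset.mem_union_left _ ha)⟩
      have hne1 : ∀ x ∈ E ∪ E.image (·⁻¹), x ≠ 1 := by
        intro x hx
        rcases Finset.mem_union.1 hx with h | h
        · exact hE h
        · obtain ⟨y, hy, rfl⟩ := Finset.mem_image.1 h
          simpa using hE hy
      have hF : ∀ f ∈ F, f ∉ (inr : K →* A ⋊[φ] K).range := by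
        intro f hf
        obtain ⟨x, hx, rfl⟩ := Finset.mem_image.1 hf
        rw [aux_mem_inr_range]
        simpa using hne1 x hx
      obtain ⟨h, hh, hprod⟩ := hSS F hFne hF
      refine ⟨h, hh, fun a ha hmem => ?_⟩
      have m1 : (inl ((φ h a)⁻¹) : A ⋊[φ] K) ∈ F :=
        Finset.mem_image_of_mem _ (Finset.mem_union_right _
          (Finset.mem_image_of_mem _ hmem))
      have m2 : (inl a : A ⋊[φ] K) ∈ F :=
        Finset.mem_image_of_mem _ (Finset.mem_union_left _ ha)
      apply hprod _ m1 _ m2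
      have : (inl ((φ h a)⁻¹) : A ⋊[φ] K) * inr h * inl a = inr h := by
        ext <;> simp
      rw [this]
      exact ⟨h, hh, rfl⟩
  · intro hA F hFne hF
    set E : Finset A := F.image (fun f => φ f.right⁻¹ f.left⁻¹) ∪ F.image (fun f => f.left)
      with hEdef
    have hleftne : ∀ f ∈ F, f.left ≠ 1 := by
      intro f hf h1
      exact hF f hf ((aux_mem_inr_range φ f).2 h1)
    have hE : ↑E ⊆ {a : A | a ≠ 1} := by
      intro x hx
      simp only [hEdef, Finset.coe_union, Set.mem_union, Finset.coe_image,
        Set.mem_image, Finset.mem_coe] at hx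
      rcases hx with ⟨f, hf, rfl⟩ | ⟨f, hf, rfl⟩
      · simp only [Set.mem_setOf_eq]
        intro h1
        apply hleftne f hf
        have := (φ f.right⁻¹).injective (h1.trans (map_one _).symm)
        simpa using this
      · exact hleftne f hf
    obtain ⟨h, hh, hdisj⟩ := hA E hE
    refine ⟨h, hh, fun f₁ h₁ f₂ h₂ hmem => ?_⟩
    obtain ⟨k, hk, hk'⟩ := Subgroup.mem_map.1 hmem
    have hleft : f₁.left * φ (f₁.right * h) f₂.left = 1 := by
      have : (f₁ * inr h * f₂).left = (inr k : A ⋊[φ] K).left := by rw [hk']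
      simpa [mul_assoc] using this
    have key : φ h f₂.left = φ f₁.right⁻¹ f₁.left⁻¹ := by
      have h2 : φ f₁.right (φ h f₂.left) = f₁.left⁻¹ := by
        rw [map_mul φ, MulAut.mul_apply] at hleft
        exact (inv_eq_of_mul_eq_one_right hleft).symm
      apply (φ f₁.right).injective
      rw [h2, ← MulAut.mul_apply, ← map_mul φ]
      simp
    exact hdisj f₂.left (Finset.mem_union_right _ (Finset.mem_image_of_mem _ h₂))
      (key ▸ Finset.mem_union_left _ (Finset.mem_image_of_mem _ h₁))
end

section
/- Let K act on a group A by automorphisms α and let H ≤ K. Then the following are equivalent: (i) for every finite set E ⊆ A \ {e} there exists h ∈ H with E ∩ α_h(E) = ∅; (ii) for every a ∈ A \ {e}, the H-orbit {α_h(a) : h ∈ H} is infinite. -/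
open scoped Pointwise


/-- For `K` acting on `A` by automorphisms and `H ≤ K`: every finite `E ⊆ A \ {e}` can be
shifted off itself by some `φ h`, `h ∈ H`, iff every `a ∈ A \ {e}` has infinite `H`-orbit. -/
theorem stmt11 {A K : Type*} [Group A] [Group K] (φ : K →* MulAut A) (H : Subgroup K) :
    (∀ E : Finset A, (↑E ⊆ {a : A | a ≠ 1}) → ∃ h ∈ H, ∀ a ∈ E, φ h a ∉ E) ↔
      (∀ a : A, a ≠ 1 → {b : A | ∃ h ∈ H, b = φ h a}.Infinite) := by
  classical
  constructor
  · intro hE a ha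
    by_contra hfin
    rw [Set.not_infinite] at hfin
    set E : Finset A := hfin.toFinset with hEdef
    have hsub : (↑E : Set A) ⊆ {a : A | a ≠ 1} := by
      intro b hb
      rw [hEdef, Set.Finite.coe_toFinset] at hb
      obtain ⟨h, _, rfl⟩ := hb
      simp only [Set.mem_setOf_eq, ne_eq]
      intro hb1
      apply ha
      have := congrArg (φ h)⁻¹ hb1
      simpa using this
    obtain ⟨h, hh, hmove⟩ := hE E hsub
    have haE : a ∈ E := by
      rw [hEdef, Set.Finite.mem_toFinset]
      exact ⟨1, H.one_mem, by simp⟩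
    exact hmove a haE (by rw [hEdef, Set.Finite.mem_toFinset]; exact ⟨h, hh, rfl⟩)
  · intro horb E hEsub
    by_contra hcon
    push_neg at hcon
    have hcov : ∀ h : H, ∃ p : A × A, p ∈ E ×ˢ E ∧ φ h p.1 = p.2 := by
      intro h
      obtain ⟨a, haE, hmem⟩ := hcon h h.2
      exact ⟨(a, φ h a), Finset.mem_product.2 ⟨haE, hmem⟩, rfl⟩
    -- stabilizer of a in H
    let Stab : A → Subgroup H :=
      fun a => {
        carrier := {h : H | φ h a = a}
        one_mem' := by simp
        mul_mem' := by
          intro x y hx hy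
          simp only [Set.mem_setOf_eq] at *
          rw [Subgroup.coe_mul, map_mul, MulAut.mul_apply, hy, hx]
        inv_mem' := by
          intro x hx
          simp only [Set.mem_setOf_eq] at *
          conv_lhs => rw [← hx]
          simp }
    let g : A × A → H := fun p =>
      if hp : ∃ k : H, φ k p.1 = p.2 then hp.choose else 1
    have hcovers : ⋃ p ∈ E ×ˢ E, g p • (Stab p.1 : Set H) = Set.univ := by
      ext h
      simp only [Set.mem_iUnion, Set.mem_univ, iff_true]
      obtain ⟨p, hpE, hp⟩ := hcov h
      refine ⟨p, hpE, ?_⟩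
      have hex : ∃ k : H, φ k p.1 = p.2 := ⟨h, hp⟩
      have hg : φ (g p) p.1 = p.2 := by
        simp only [g, dif_pos hex]
        exact hex.choose_spec
      rw [mem_leftCoset_iff]
      show φ (((g p)⁻¹ : H) * (h : K)) p.1 = p.1
      rw [map_mul, MulAut.mul_apply, hp, ← hg]
      simp
    obtain ⟨p, hpE, hfi⟩ := Subgroup.exists_finiteIndex_of_leftCoset_cover hcovers
    set a := p.1 with ha
    have haE : a ∈ E := (Finset.mem_product.1 hpE).1
    have hane : a ≠ 1 := hEsub haE
    -- орбита is finite: factor through the quotient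
    have : Finite (H ⧸ Stab a) := by haveI := hfi; exact Subgroup.finite_quotient_of_finiteIndex
    have hfac : ∀ x y : H, (QuotientGroup.mk x : H ⧸ Stab a) = QuotientGroup.mk y →
        φ x a = φ y a := by
      intro x y hxy
      rw [QuotientGroup.eq] at hxy
      have : φ ((x⁻¹ * y : H) : K) a = a := hxy
      rw [Subgroup.coe_mul, map_mul, MulAut.mul_apply] at this
      have := congrArg (φ x) this
      simpa using this.symm
    let f : H ⧸ Stab a → A := Quotient.lift (fun h : H => φ h a)
      (fun x y hxy => hfac x y (Quotient.sound hxy))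
    have hsubrange : {b : A | ∃ h ∈ H, b = φ h a} ⊆ Set.range f := by
      rintro b ⟨h, hh, rfl⟩
      exact ⟨QuotientGroup.mk ⟨h, hh⟩, rfl⟩
    exact horb a hane (Set.Finite.subset (Set.finite_range f) hsubrange)
end

section
/- Let K act on a countable set X, let Z be a nontrivial group, let A = Z^(X) be the group of finitely supported functions X → Z with pointwise multiplication, and let K act on A by (k·a)(x) = a(k⁻¹·x). Let H ≤ K. Then every non-identity element a ∈ A has finite stabilizer {h ∈ H : h·a = a} if and only if for every x ∈ X the stabilizer H_x = {h ∈ H : h·x = x} is finite. -/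
/-- Let `K` act on a countable set `X`, `Z` a nontrivial (additively written) group,
`A = Z^(X)` the finitely supported functions with the shift action
`(h • a) x = a (h⁻¹ • x)`, and `H ≤ K`. Every nonzero `a ∈ A` has finite stabilizer in `H`
iff every point stabilizer `H_x` is finite. -/
theorem stmt12 {K X Z : Type*} [Group K] [Countable X] [MulAction K X]
    [AddGroup Z] [Nontrivial Z] (H : Subgroup K) :
    (∀ a : X →₀ Z, a ≠ 0 →
        {h : K | h ∈ H ∧ Finsupp.equivMapDomain (MulAction.toPerm h) a = a}.Finite) ↔
      (∀ x : X, {h : K | h ∈ H ∧ h • x = x}.Finite) := by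
  constructor
  · intro hA x
    obtain ⟨z, hz⟩ := exists_ne (0 : Z)
    have h := hA (Finsupp.single x z) (by simpa [Finsupp.single_eq_zero] using hz)
    refine h.subset ?_
    rintro k ⟨hk, hkx⟩
    exact ⟨hk, by rw [Finsupp.equivMapDomain_single]; simp [hkx]⟩
  · intro hX a ha
    obtain ⟨x, hx⟩ : ∃ x, a x ≠ 0 := by
      by_contra hc
      push_neg at hc
      exact ha (Finsupp.ext hc)
    have key : {h : K | h ∈ H ∧ Finsupp.equivMapDomain (MulAction.toPerm h) a = a} ⊆
        ⋃ y ∈ (a.support : Set X), {h : K | h ∈ H ∧ h • x = y} := by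
      rintro k ⟨hk, hka⟩
      have : a (k • x) ≠ 0 := by
        have := DFunLike.congr_fun hka (k • x)
        simp only [Finsupp.equivMapDomain_apply] at this
        rw [← this]
        simpa using hx
      exact Set.mem_biUnion (Finsupp.mem_support_iff.mpr this) ⟨hk, rfl⟩
    refine (Set.Finite.biUnion (a.support.finite_toSet) ?_).subset key
    intro y _
    rcases Set.eq_empty_or_nonempty {h : K | h ∈ H ∧ h • x = y} with he | ⟨h0, hh0, hh0x⟩
    · simp [he]
    · have : {h : K | h ∈ H ∧ h • x = y} ⊆ (fun g => h0 * g) '' {h : K | h ∈ H ∧ h • x = x} := by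
        rintro k ⟨hk, hkx⟩
        refine ⟨h0⁻¹ * k, ⟨H.mul_mem (H.inv_mem hh0) hk, ?_⟩, by group⟩
        rw [mul_smul, hkx, ← hh0x, inv_smul_smul]
      exact ((hX x).image _).subset this
end

section
/- Let K act on a group A by automorphisms and let H ≤ K. Suppose (i) for every a ∈ A \ {e} there exists h ∈ H with α_h(a) ≠ a, and (ii) there exists a₀ ∈ A \ {e} with finite H-orbit. Then with G = A ⋊ K, one has N_G(H) = K (assuming additionally H ⊴ K), but the triple H ≤ K ≤ G fails condition (SS): there is a nonempty finite F ⊆ G \ K such that for all h ∈ H, FhF ∩ H ≠ ∅. -/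
open SemidirectProduct

lemma memHmap {A K : Type*} [Group A] [Group K] (φ : K →* MulAut A) (H : Subgroup K)
    (x : A ⋊[φ] K) :
    x ∈ H.map (SemidirectProduct.inr : K →* A ⋊[φ] K) ↔ x.left = 1 ∧ x.right ∈ H := by
  constructor
  · rintro ⟨h, hh, rfl⟩
    exact ⟨by simp, by simpa using hh⟩
  · rintro ⟨h1, h2⟩
    exact ⟨x.right, h2, by ext <;> simp [h1]⟩

lemma memRangeInr {A K : Type*} [Group A] [Group K] (φ : K →* MulAut A)
    (x : A ⋊[φ] K) :
    x ∈ (SemidirectProduct.inr : K →* A ⋊[φ] K).range ↔ x.left = 1 := by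
  constructor
  · rintro ⟨k, rfl⟩; simp
  · intro h; exact ⟨x.right, by ext <;> simp [h]⟩

/-- If no nonidentity element of `A` is fixed by all of `H`, but some `a₀ ≠ 1` has finite
`H`-orbit, then in `G = A ⋊[φ] K` one has `N_G(H) = K` while condition (SS) fails. -/
theorem stmt18 {A K : Type*} [Group A] [Group K] (φ : K →* MulAut A)
    (H : Subgroup K) (hH : H.Normal)
    (hfix : ∀ a : A, a ≠ 1 → ∃ h ∈ H, φ h a ≠ a)
    (a₀ : A) (ha₀ : a₀ ≠ 1) (horb : {b : A | ∃ h ∈ H, b = φ h a₀}.Finite) :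
    Subgroup.normalizer ((H.map (SemidirectProduct.inr : K →* A ⋊[φ] K)) : Set (A ⋊[φ] K)) =
        (SemidirectProduct.inr : K →* A ⋊[φ] K).range ∧
      ∃ F : Finset (A ⋊[φ] K), F.Nonempty ∧
        (∀ f ∈ F, f ∉ (SemidirectProduct.inr : K →* A ⋊[φ] K).range) ∧
        ∀ h ∈ H, ∃ f₁ ∈ F, ∃ f₂ ∈ F,
          f₁ * SemidirectProduct.inr h * f₂ ∈
            H.map (SemidirectProduct.inr : K →* A ⋊[φ] K) := by
  have conj_left : ∀ (g : A ⋊[φ] K) (n : A ⋊[φ] K),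
      (g * n * g⁻¹).left =
        g.left * φ g.right n.left * φ (g.right * n.right * g.right⁻¹) g.left⁻¹ := by
    intro g n
    simp [mul_left, inv_left, mul_right, map_mul, mul_assoc]
  constructor
  · ext g
    rw [Subgroup.mem_normalizer_iff, memRangeInr]
    constructor
    · intro hg
      by_contra hgl
      have hinv : g.left⁻¹ ≠ 1 := by simpa using hgl
      obtain ⟨h', hh', hne⟩ := hfix g.left⁻¹ hinv
      have hmem : g.right⁻¹ * h' * g.right ∈ H := by
        simpa using hH.conj_mem h' hh' g.right⁻¹
      have h1 : SemidirectProduct.inr (φ := φ) (g.right⁻¹ * h' * g.right) ∈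
          H.map (SemidirectProduct.inr : K →* A ⋊[φ] K) := ⟨_, hmem, rfl⟩
      have h2 := (hg _).mp h1
      rw [memHmap] at h2
      obtain ⟨h2l, -⟩ := h2
      rw [conj_left] at h2l
      simp only [left_inr, right_inr, map_one, mul_one] at h2l
      have h2l' : g.left * φ h' g.left⁻¹ = 1 := by
        have : g.right * (g.right⁻¹ * h' * g.right) * g.right⁻¹ = h' := by group
        rwa [this] at h2l
      exact hne (eq_inv_of_mul_eq_one_right h2l')
    · rintro hgl n
      rw [memHmap, memHmap, conj_left, mul_right, mul_right, inv_right]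
      rw [hgl]
      simp only [one_mul, inv_one, map_one, mul_one]
      constructor
      · rintro ⟨h1, h2⟩
        exact ⟨by simp [h1], hH.conj_mem _ h2 g.right⟩
      · rintro ⟨h1, h2⟩
        refine ⟨(φ g.right).injective (by simpa using h1), ?_⟩
        have := hH.conj_mem _ h2 g.right⁻¹
        simpa [mul_assoc] using this
  · classical
    have hSne : ∀ b ∈ {b : A | ∃ h ∈ H, b = φ h a₀}, b ≠ 1 := by
      rintro b ⟨h, hh, rfl⟩ hb
      exact ha₀ ((φ h).injective (by simpa using hb))
    have ha₀S : a₀ ∈ {b : A | ∃ h ∈ H, b = φ h a₀} := ⟨1, H.one_mem, by simp⟩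
    refine ⟨horb.toFinset.image SemidirectProduct.inl ∪
        horb.toFinset.image (fun b => SemidirectProduct.inl b⁻¹), ?_, ?_, ?_⟩
    · exact ⟨SemidirectProduct.inl a₀, Finset.mem_union_left _
        (Finset.mem_image_of_mem _ (horb.mem_toFinset.mpr ha₀S))⟩
    · intro f hf
      rw [Finset.mem_union, Finset.mem_image, Finset.mem_image] at hf
      rw [memRangeInr]
      rcases hf with ⟨b, hb, rfl⟩ | ⟨b, hb, rfl⟩ <;>
        rw [Set.Finite.mem_toFinset] at hb <;> simp [hSne b hb]
    · intro h hh
      refine ⟨SemidirectProduct.inl (φ h a₀)⁻¹, ?_, SemidirectProduct.inl a₀, ?_, ?_⟩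
      · exact Finset.mem_union_right _ (Finset.mem_image.mpr
          ⟨φ h a₀, horb.mem_toFinset.mpr ⟨h, hh, rfl⟩, rfl⟩)
      · exact Finset.mem_union_left _ (Finset.mem_image.mpr
          ⟨a₀, horb.mem_toFinset.mpr ha₀S, rfl⟩)
      · rw [memHmap]
        exact ⟨by simp [mul_left, mul_right], by simp [mul_right, hh]⟩
end
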